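/- Under the combined hypotheses of the displacement-error theorem and the empirical-ratio lemma — namely: K ≥ 2, η ≥ 0, δ > 0, R ≥ 0, G ≥ 0, M₃ ≥ 0; L : ℝ^d → ℝ is three times continuously differentiable on an open set U star-shaped with respect to θ₀ with third derivative bounded in norm by M₃ on U; g₀ = ∇L(θ₀), H₀ = ∇²L(θ₀), g₁ = g₀ − η·H₀·g₀, ρ = max(1, ‖I − η·H₀‖); the true gradient-descent trajectory θ_{n+1}^{true} = θ_n^{true} − η·∇L(θ_n^{true}) from θ₀ and the quadratic-model trajectory θ_{n+1}^{quad} = θ_n^{quad} − η·(I − η·H₀)^n g₀ from θ₀ both remain in U for 0 ≤ n ≤ K, and sup_{0 ≤ n < K} ‖∇L(θ_n^{true})‖ ≤ G; 𝒜 = {i : |g₀_i| > δ} with complement 𝒮, r_i = g₁_i/g₀_i for i ∈ 𝒜, r̄_i = 1 − η·H₀_{ii}, with |r_i| ≤ R on 𝒜 and |r̄_i| ≤ R for all i; θ_K^{emp} defined coordinate-wise as θ_{0,i} − η·g₀_i·S_K(r_i) on 𝒜 and θ_{0,i} − η·(g₀_i + g₁_i) on 𝒮 — one has ‖θ_K^{emp}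 − θ_K^{true}‖ ≤ (K(K−1)/2)·η²·‖H₀^off‖·‖g₀‖·ρ^{K−2} + η²·C_{K,R}·(‖H₀^off‖_∞/δ)·‖g₀‖_∞·‖g₀ restricted to 𝒜‖ + η·D_{K,R}·∑_{i∈𝒮}|g₀_i| + η²·∑_{i∈𝒮}|(H₀·g₀)_i| + (K(K−1)(2K−1)/12)·η³·M₃·G²·ρ^{K−1}, where C_{K,R} = ∑_{n=1}^{K−1} n·R^{n−1} and D_{K,R} = 2 + ∑_{n=0}^{K−1} R^n. -/

import Mathlib

open Finset Set


/-- Geometric sum `S_K(x) = ∑_{n=0}^{K-1} x^n`. -/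
noncomputable def SK (K : ℕ) (x : ℝ) : ℝ := ∑ n ∈ Finset.range K, x ^ n

/-- Operator (spectral) norm of a real matrix, induced by the Euclidean norm. -/
noncomputable def matOpNorm {d : ℕ} (A : Matrix (Fin d) (Fin d) ℝ) : ℝ :=
  ‖(Matrix.toEuclideanCLM (𝕜 := ℝ) (n := Fin d) A :
      EuclideanSpace ℝ (Fin d) →L[ℝ] EuclideanSpace ℝ (Fin d))‖

/-- A matrix acting on a Euclidean vector by matrix-vector multiplication. -/
noncomputable def mulVecE {d : ℕ} (A : Matrix (Fin d) (Fin d) ℝ)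
    (v : EuclideanSpace ℝ (Fin d)) : EuclideanSpace ℝ (Fin d) :=
  Matrix.toEuclideanCLM (𝕜 := ℝ) (n := Fin d) A v

/-- Maximum absolute coordinate of a vector (sup norm), for `0 < d`. -/
noncomputable def vecSupNorm {d : ℕ} (hd : 0 < d) (v : Fin d → ℝ) : ℝ :=
  Finset.univ.sup' (Finset.univ_nonempty_iff.mpr ⟨⟨0, hd⟩⟩) fun j => |v j|

/-- Maximum off-diagonal absolute row sum `max_i ∑_{j ≠ i} |A i j|`, for `0 < d`. -/
noncomputable def offRowSum {d : ℕ} (hd : 0 < d) (A : Matrix (Fin d) (Fin d) ℝ) : ℝ :=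
  Finset.univ.sup' (Finset.univ_nonempty_iff.mpr ⟨⟨0, hd⟩⟩) fun i =>
    ∑ j ∈ Finset.univ.erase i, |A i j|

/-- Reinterpret a plain vector as an element of Euclidean space. -/
noncomputable def toE {d : ℕ} (f : Fin d → ℝ) : EuclideanSpace ℝ (Fin d) :=
  (WithLp.equiv 2 (∀ _ : Fin d, ℝ)).symm f

/-! ### Generic helper lemmas -/

section helpers
variable {d : ℕ}

lemma toE_apply (f : Fin d → ℝ) (i : Fin d) : toE f i = f i := rfl

lemma mulVecE_apply (A : Matrix (Fin d) (Fin d) ℝ) (v : EuclideanSpace ℝ (Fin d)) (i : Fin d) :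
    mulVecE A v i = A.mulVec (fun j => v j) i := by
  have h := Matrix.ofLp_toEuclideanCLM (𝕜 := ℝ) (n := Fin d) A v
  have := congrFun h i
  exact this

lemma mulVecE_norm_le (A : Matrix (Fin d) (Fin d) ℝ) (v : EuclideanSpace ℝ (Fin d)) :
    ‖mulVecE A v‖ ≤ matOpNorm A * ‖v‖ :=
  (Matrix.toEuclideanCLM (𝕜 := ℝ) (n := Fin d) A).le_opNorm v

lemma mulVecE_mul (A B : Matrix (Fin d) (Fin d) ℝ) (v : EuclideanSpace ℝ (Fin d)) :
    mulVecE (A * B) v = mulVecE A (mulVecE B v) := by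
  simp [mulVecE, map_mul, ContinuousLinearMap.mul_apply]

lemma mulVecE_one (v : EuclideanSpace ℝ (Fin d)) : mulVecE 1 v = v := by
  simp [mulVecE, map_one]

lemma mulVecE_smulM (c : ℝ) (A : Matrix (Fin d) (Fin d) ℝ) (v : EuclideanSpace ℝ (Fin d)) :
    mulVecE (c • A) v = c • mulVecE A v := by
  simp [mulVecE, map_smul]

lemma mulVecE_subM (A B : Matrix (Fin d) (Fin d) ℝ) (v : EuclideanSpace ℝ (Fin d)) :
    mulVecE (A - B) v = mulVecE A v - mulVecE B v := by
  simp [mulVecE, map_sub, ContinuousLinearMap.sub_apply]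

lemma mulVecE_subV (A : Matrix (Fin d) (Fin d) ℝ) (v w : EuclideanSpace ℝ (Fin d)) :
    mulVecE A (v - w) = mulVecE A v - mulVecE A w := by
  simp [mulVecE]

lemma mulVecE_smulV (A : Matrix (Fin d) (Fin d) ℝ) (c : ℝ) (v : EuclideanSpace ℝ (Fin d)) :
    mulVecE A (c • v) = c • mulVecE A v := by
  simp [mulVecE]

lemma mulVecE_zero (A : Matrix (Fin d) (Fin d) ℝ) : mulVecE A 0 = 0 := by
  simp [mulVecE]

lemma coord_le_normE (u : EuclideanSpace ℝ (Fin d)) (i : Fin d) : |u i| ≤ ‖u‖ := by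
  rw [EuclideanSpace.norm_eq]
  have h1 : |u i| = Real.sqrt (|u i| ^ 2) := by
    rw [Real.sqrt_sq (abs_nonneg _)]
  rw [h1]
  apply Real.sqrt_le_sqrt
  have : |u i| ^ 2 = ‖u i‖ ^ 2 := by rw [Real.norm_eq_abs]
  rw [this]
  exact Finset.single_le_sum (f := fun j => ‖u j‖ ^ 2) (fun j _ => sq_nonneg _) (mem_univ i)

lemma normE_le_of_coord_le {u v : EuclideanSpace ℝ (Fin d)} {c : ℝ} (hc : 0 ≤ c)
    (h : ∀ i, |u i| ≤ c * |v i|) : ‖u‖ ≤ c * ‖v‖ := by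
  rw [EuclideanSpace.norm_eq, EuclideanSpace.norm_eq]
  have h2 : ∑ i, ‖u i‖ ^ 2 ≤ c ^ 2 * ∑ i, ‖v i‖ ^ 2 := by
    rw [Finset.mul_sum]
    apply Finset.sum_le_sum
    intro i _
    calc ‖u i‖ ^ 2 = |u i| ^ 2 := by rw [Real.norm_eq_abs]
      _ ≤ (c * |v i|) ^ 2 := by
          apply pow_le_pow_left₀ (abs_nonneg _) (h i)
      _ = c ^ 2 * ‖v i‖ ^ 2 := by rw [Real.norm_eq_abs]; ring
  calc Real.sqrt (∑ i, ‖u i‖ ^ 2) ≤ Real.sqrt (c ^ 2 * ∑ i, ‖v i‖ ^ 2) :=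
        Real.sqrt_le_sqrt h2
    _ = c * Real.sqrt (∑ i, ‖v i‖ ^ 2) := by
        rw [Real.sqrt_mul (sq_nonneg c), Real.sqrt_sq hc]

lemma normE_le_sum_abs (u : EuclideanSpace ℝ (Fin d)) (s : Finset (Fin d))
    (h : ∀ i ∉ s, u i = 0) : ‖u‖ ≤ ∑ i ∈ s, |u i| := by
  rw [EuclideanSpace.norm_eq]
  have h1 : ∑ i, ‖u i‖ ^ 2 = ∑ i ∈ s, |u i| ^ 2 := by
    rw [← Finset.sum_subset (Finset.subset_univ s)]
    · simp [Real.norm_eq_abs]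
    · intro i _ hi; simp [h i hi]
  rw [h1]
  have h2 : ∑ i ∈ s, |u i| ^ 2 ≤ (∑ i ∈ s, |u i|) ^ 2 :=
    Finset.sum_sq_le_sq_sum_of_nonneg (fun i _ => abs_nonneg _)
  calc Real.sqrt (∑ i ∈ s, |u i| ^ 2) ≤ Real.sqrt ((∑ i ∈ s, |u i|) ^ 2) := Real.sqrt_le_sqrt h2
    _ = ∑ i ∈ s, |u i| := Real.sqrt_sq (Finset.sum_nonneg fun i _ => abs_nonneg _)

end helpers

/-! ### Elementary real lemmas -/

lemma abs_pow_sub_pow_le' {x y R : ℝ} (hx : |x| ≤ R) (hy : |y| ≤ R) (n : ℕ) :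
    |x ^ n - y ^ n| ≤ n * R ^ (n - 1) * |x - y| := by
  have hR : 0 ≤ R := le_trans (abs_nonneg x) hx
  have key := geom_sum₂_mul x y n
  rw [← key, abs_mul]
  gcongr
  calc |∑ i ∈ range n, x ^ i * y ^ (n - 1 - i)| ≤ ∑ i ∈ range n, |x ^ i * y ^ (n - 1 - i)| :=
        Finset.abs_sum_le_sum_abs _ _
    _ ≤ ∑ i ∈ range n, R ^ (n - 1) := by
        apply Finset.sum_le_sum
        intro i hi
        rw [abs_mul, abs_pow, abs_pow]
        have hin : i + (n - 1 - i) = n - 1 := by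
          have := Finset.mem_range.mp hi; omega
        calc |x| ^ i * |y| ^ (n - 1 - i) ≤ R ^ i * R ^ (n - 1 - i) :=
              mul_le_mul (pow_le_pow_left₀ (abs_nonneg x) hx i)
                (pow_le_pow_left₀ (abs_nonneg y) hy _)
                (pow_nonneg (abs_nonneg y) _) (pow_nonneg hR i)
          _ = R ^ (n - 1) := by rw [← pow_add, hin]
    _ = n * R ^ (n - 1) := by rw [Finset.sum_const, card_range, nsmul_eq_mul]

lemma SK_lip {K : ℕ} {x y R : ℝ} (hx : |x| ≤ R) (hy : |y| ≤ R) :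
    |SK K x - SK K y| ≤ (∑ n ∈ Finset.range K, (n : ℝ) * R ^ (n - 1)) * |x - y| := by
  rw [SK, SK, ← Finset.sum_sub_distrib, Finset.sum_mul]
  calc |∑ n ∈ range K, (x ^ n - y ^ n)| ≤ ∑ n ∈ range K, |x ^ n - y ^ n| :=
        Finset.abs_sum_le_sum_abs _ _
    _ ≤ ∑ n ∈ range K, (n : ℝ) * R ^ (n - 1) * |x - y| :=
        Finset.sum_le_sum fun n _ => abs_pow_sub_pow_le' hx hy n

lemma SK_abs_le {K : ℕ} {x R : ℝ} (hx : |x| ≤ R) :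
    |SK K x| ≤ ∑ n ∈ Finset.range K, R ^ n := by
  rw [SK]
  calc |∑ n ∈ range K, x ^ n| ≤ ∑ n ∈ range K, |x ^ n| := Finset.abs_sum_le_sum_abs _ _
    _ ≤ ∑ n ∈ range K, R ^ n := by
        apply Finset.sum_le_sum
        intro n _
        rw [abs_pow]
        exact pow_le_pow_left₀ (abs_nonneg x) hx n

lemma sum_range_cast (n : ℕ) :
    ∑ m ∈ Finset.range n, (m : ℝ) = n * ((n : ℝ) - 1) / 2 := by
  induction n with
  | zero => simp
  | succ k ih => rw [Finset.sum_range_succ, ih]; push_cast; ring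

lemma sum_range_sq_cast (n : ℕ) :
    ∑ m ∈ Finset.range n, (m : ℝ) ^ 2 = n * ((n : ℝ) - 1) * (2 * (n : ℝ) - 1) / 6 := by
  induction n with
  | zero => simp
  | succ k ih => rw [Finset.sum_range_succ, ih]; push_cast; ring


noncomputable def dualIso (F : Type*) [NormedAddCommGroup F] [InnerProductSpace ℝ F]
    [CompleteSpace F] : StrongDual ℝ F ≃ₗᵢ[ℝ] F :=
  (InnerProductSpace.toDual ℝ F).symm

variable {F : Type*} [NormedAddCommGroup F] [InnerProductSpace ℝ F] [CompleteSpace F]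

lemma gradient_eq_comp (L : F → ℝ) :
    gradient L = (dualIso F) ∘ (fun x => fderiv ℝ L x) := rfl

lemma taylor_quad {G : Type*} [NormedAddCommGroup G] [NormedSpace ℝ G]
    {F' : Type*} [NormedAddCommGroup F'] [NormedSpace ℝ F']
    (f : F' → G) (f' : F' → (F' →L[ℝ] G)) (a b : F') (M : ℝ)
    (hd : ∀ x ∈ segment ℝ a b, HasFDerivAt f (f' x) x)
    (hlip : ∀ x ∈ segment ℝ a b, ‖f' x - f' a‖ ≤ M * ‖x - a‖) :
    ‖f b - f a - f' a (b - a)‖ ≤ M / 2 * ‖b - a‖ ^ 2 := by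
  set v := b - a with hv
  set γ : ℝ → F' := fun t => a + t • v with hγdef
  have hmem : ∀ t ∈ Icc (0:ℝ) 1, γ t ∈ segment ℝ a b := by
    intro t ht
    refine ⟨1 - t, t, by linarith [ht.2], ht.1, by ring, ?_⟩
    simp only [hγdef, hv]
    module
  set g : ℝ → G := fun t => f (γ t) - f a - t • (f' a v) with hgdef
  have hγ : ∀ t : ℝ, HasDerivAt γ v t := by
    intro t
    have := ((hasDerivAt_id t).smul_const v).const_add a
    simp only [one_smul] at this
    exact this
  have hg : ∀ t ∈ Icc (0:ℝ) 1, HasDerivAt g ((f' (γ t) - f' a) v) t := by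
    intro t ht
    have h1 : HasDerivAt (fun t => f (γ t)) (f' (γ t) v) t :=
      (hd (γ t) (hmem t ht)).comp_hasDerivAt t (hγ t)
    have h2 : HasDerivAt (fun t : ℝ => t • (f' a v)) (f' a v) t := by
      simpa using (hasDerivAt_id t).smul_const (f' a v)
    have := (h1.sub_const (f a)).sub h2
    simp only [ContinuousLinearMap.sub_apply]
    exact this
  set B : ℝ → ℝ := fun t => M / 2 * ‖v‖ ^ 2 * t ^ 2 with hBdef
  have hB : ∀ t : ℝ, HasDerivAt B (M * ‖v‖ ^ 2 * t) t := by
    intro t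
    have := (hasDerivAt_pow 2 t).const_mul (M / 2 * ‖v‖ ^ 2)
    refine this.congr_deriv ?_
    norm_num
    ring
  have bound : ∀ t ∈ Ico (0:ℝ) 1, ‖(f' (γ t) - f' a) v‖ ≤ M * ‖v‖ ^ 2 * t := by
    intro t ht
    have h1 : ‖(f' (γ t) - f' a) v‖ ≤ ‖f' (γ t) - f' a‖ * ‖v‖ :=
      (f' (γ t) - f' a).le_opNorm v
    have h2 : ‖f' (γ t) - f' a‖ ≤ M * ‖γ t - a‖ :=
      hlip (γ t) (hmem t (Ico_subset_Icc_self ht))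
    have h3 : ‖γ t - a‖ = t * ‖v‖ := by
      simp only [hγdef, add_sub_cancel_left, norm_smul, Real.norm_eq_abs,
        abs_of_nonneg ht.1]
    calc ‖(f' (γ t) - f' a) v‖ ≤ (M * ‖γ t - a‖) * ‖v‖ :=
          h1.trans (by gcongr)
      _ = M * ‖v‖ ^ 2 * t := by rw [h3]; ring
  have key := image_norm_le_of_norm_deriv_right_le_deriv_boundary
    (f := g) (f' := fun t => (f' (γ t) - f' a) v) (a := 0) (b := 1)
    (B := B) (B' := fun t => M * ‖v‖ ^ 2 * t)
    (fun t ht => (hg t ht).continuousAt.continuousWithinAt)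
    (fun t ht => (hg t (Ico_subset_Icc_self ht)).hasDerivWithinAt)
    (by simp [hgdef, hγdef, hBdef]) (fun t => hB t) bound
  have h1 := key (right_mem_Icc.mpr zero_le_one)
  have hγ1 : γ 1 = b := by simp [hγdef, hv]
  have hg1 : g 1 = f b - f a - f' a (b - a) := by
    simp [hgdef, hγ1, hv]
  rw [hg1] at h1
  calc ‖f b - f a - f' a (b - a)‖ ≤ B 1 := h1
    _ = M / 2 * ‖b - a‖ ^ 2 := by simp [hBdef, hv]

lemma grad_taylor (L : F → ℝ) (U : Set F) (hU : IsOpen U)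
    (θ₀ : F) (hstar : StarConvex ℝ θ₀ U) (hL : ContDiffOn ℝ 3 L U)
    (M₃ : ℝ) (hbound : ∀ x ∈ U, ‖iteratedFDeriv ℝ 3 L x‖ ≤ M₃) :
    ∀ x ∈ U, ‖gradient L x - gradient L θ₀ - fderiv ℝ (gradient L) θ₀ (x - θ₀)‖ ≤
      M₃ / 2 * ‖x - θ₀‖ ^ 2 := by
  intro x hx
  have df1 : ContDiffOn ℝ 2 (fderiv ℝ L) U := hL.fderiv_of_isOpen hU (by norm_num)
  have df2 : ContDiffOn ℝ 1 (fderiv ℝ (fderiv ℝ L)) U := df1.fderiv_of_isOpen hU (by norm_num)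
  set isoL : StrongDual ℝ F →L[ℝ] F :=
    ((dualIso F).toLinearIsometry.toContinuousLinearMap) with hisoL
  have hisoL_apply : ∀ φ, isoL φ = dualIso F φ := fun φ => rfl
  set D2 : F → (F →L[ℝ] StrongDual ℝ F) := fun y => fderiv ℝ (fderiv ℝ L) y with hD2
  have hgrad_fderiv : ∀ y ∈ U, HasFDerivAt (gradient L) (isoL.comp (D2 y)) y := by
    intro y hy
    have h1 : DifferentiableAt ℝ (fderiv ℝ L) y :=
      (df1.differentiableOn (by norm_num)).differentiableAt (hU.mem_nhds hy)
    have h2 : HasFDerivAt (fun z => isoL (fderiv ℝ L z)) (isoL.comp (D2 y)) y :=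
      isoL.hasFDerivAt.comp y h1.hasFDerivAt
    exact h2
  have hfg : ∀ y ∈ U, fderiv ℝ (gradient L) y = isoL.comp (D2 y) := fun y hy =>
    (hgrad_fderiv y hy).fderiv
  have hseg : segment ℝ θ₀ x ⊆ U := hstar.segment_subset hx
  have hθ₀U : θ₀ ∈ U := hseg (left_mem_segment ℝ θ₀ x)
  have hlipD2 : ∀ y ∈ segment ℝ θ₀ x, ‖D2 y - D2 θ₀‖ ≤ M₃ * ‖y - θ₀‖ := by
    intro y hy
    refine Convex.norm_image_sub_le_of_norm_fderiv_le (𝕜 := ℝ) (f := D2) ?_ ?_ (convex_segment θ₀ x)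
      (left_mem_segment ℝ θ₀ x) hy
    · intro z hz
      exact (df2.differentiableOn (by norm_num)).differentiableAt (hU.mem_nhds (hseg hz))
    · intro z hz
      have e1 := (norm_iteratedFDeriv_one (𝕜 := ℝ) (x := z) D2).symm
      have e3 : ‖iteratedFDeriv ℝ 1 D2 z‖ = ‖iteratedFDeriv ℝ 2 (fderiv ℝ L) z‖ :=
        norm_iteratedFDeriv_fderiv (n := 1)
      have e4 : ‖iteratedFDeriv ℝ 2 (fderiv ℝ L) z‖ = ‖iteratedFDeriv ℝ 3 L z‖ :=
        norm_iteratedFDeriv_fderiv (n := 2)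
      rw [e1, e3, e4]
      exact hbound z (hseg hz)
  refine taylor_quad (gradient L) (fun y => fderiv ℝ (gradient L) y) θ₀ x M₃ ?_ ?_
  · intro y hy
    have := hgrad_fderiv y (hseg hy)
    rwa [← hfg y (hseg hy)] at this
  · intro y hy
    show ‖fderiv ℝ (gradient L) y - fderiv ℝ (gradient L) θ₀‖ ≤ M₃ * ‖y - θ₀‖
    rw [hfg y (hseg hy), hfg θ₀ hθ₀U, ← ContinuousLinearMap.comp_sub]
    rw [(dualIso F).toLinearIsometry.norm_toContinuousLinearMap_comp]
    exact hlipD2 y hy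

lemma sumE_apply {d : ℕ} (s : Finset ℕ) (f : ℕ → EuclideanSpace ℝ (Fin d)) (i : Fin d) :
    (∑ n ∈ s, f n) i = ∑ n ∈ s, f n i := by
  induction s using Finset.cons_induction with
  | empty => simp
  | cons a s ha ih => rw [Finset.sum_cons, Finset.sum_cons, ← ih]; simp


/-- combined displacement-error bound for the empirical-ratio surrogate. -/
theorem stmt13 {d : ℕ} (hd : 0 < d) (K : ℕ) (hK : 2 ≤ K)
    (η δ R G M₃ : ℝ) (hη : 0 ≤ η) (hδ : 0 < δ) (hR : 0 ≤ R) (hG : 0 ≤ G) (hM₃ : 0 ≤ M₃)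
    (L : EuclideanSpace ℝ (Fin d) → ℝ)
    (U : Set (EuclideanSpace ℝ (Fin d))) (hU : IsOpen U)
    (θ₀ : EuclideanSpace ℝ (Fin d)) (hstar : StarConvex ℝ θ₀ U)
    (hL : ContDiffOn ℝ 3 L U)
    (hbound : ∀ x ∈ U, ‖iteratedFDeriv ℝ 3 L x‖ ≤ M₃)
    (g₀ : EuclideanSpace ℝ (Fin d)) (hg₀ : g₀ = gradient L θ₀)
    (H₀ : Matrix (Fin d) (Fin d) ℝ)
    (hH₀ : ∀ v, mulVecE H₀ v = fderiv ℝ (gradient L) θ₀ v)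
    (g₁ : EuclideanSpace ℝ (Fin d))
    (hg₁ : ∀ i, g₁ i = g₀ i - η * H₀.mulVec (fun j => g₀ j) i)
    (ρ : ℝ) (hρ : ρ = max 1 (matOpNorm (1 - η • H₀)))
    (θtrue θquad : ℕ → EuclideanSpace ℝ (Fin d))
    (htrue0 : θtrue 0 = θ₀) (hquad0 : θquad 0 = θ₀)
    (htrue : ∀ n, θtrue (n + 1) = θtrue n - η • gradient L (θtrue n))
    (hquad : ∀ n, θquad (n + 1) = θquad n - η • mulVecE ((1 - η • H₀) ^ n) g₀)
    (hmemT : ∀ n ≤ K, θtrue n ∈ U) (hmemQ : ∀ n ≤ K, θquad n ∈ U)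
    (hGbd : ∀ n < K, ‖gradient L (θtrue n)‖ ≤ G)
    (r rbar : Fin d → ℝ)
    (hr : ∀ i, δ < |g₀ i| → r i = g₁ i / g₀ i)
    (hrbar : ∀ i, rbar i = 1 - η * H₀ i i)
    (hrR : ∀ i, δ < |g₀ i| → |r i| ≤ R)
    (hrbarR : ∀ i, |rbar i| ≤ R)
    (CKR DKR : ℝ)
    (hC : CKR = ∑ n ∈ Finset.Icc 1 (K - 1), (n : ℝ) * R ^ (n - 1))
    (hDk : DKR = 2 + ∑ n ∈ Finset.range K, R ^ n)
    (θemp : EuclideanSpace ℝ (Fin d))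
    (hemp : ∀ i, θemp i =
      if δ < |g₀ i| then θ₀ i - η * g₀ i * SK K (r i)
      else θ₀ i - η * (g₀ i + g₁ i)) :
    ‖θemp - θtrue K‖ ≤
      (K : ℝ) * ((K : ℝ) - 1) / 2 * η ^ 2 *
          matOpNorm (H₀ - Matrix.diagonal (fun i => H₀ i i)) * ‖g₀‖ * ρ ^ (K - 2)
        + η ^ 2 * CKR * (offRowSum hd H₀ / δ) * vecSupNorm hd (fun j => g₀ j) *
          ‖toE (fun i => if δ < |g₀ i| then g₀ i else 0)‖
        + η * DKR * ∑ i ∈ Finset.univ.filter (fun i => ¬ δ < |g₀ i|), |g₀ i|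
        + η ^ 2 * ∑ i ∈ Finset.univ.filter (fun i => ¬ δ < |g₀ i|),
            |H₀.mulVec (fun j => g₀ j) i|
        + (K : ℝ) * ((K : ℝ) - 1) * (2 * (K : ℝ) - 1) / 12 *
          η ^ 3 * M₃ * G ^ 2 * ρ ^ (K - 1) := by
  set A := (1 : Matrix (Fin d) (Fin d) ℝ) - η • H₀ with hAdef
  set Dg := Matrix.diagonal (fun i => H₀ i i) with hDgdef
  set Hoff := H₀ - Dg with hHoffdef
  set B := (1 : Matrix (Fin d) (Fin d) ℝ) - η • Dg with hBdef
  have hρ1 : (1:ℝ) ≤ ρ := by rw [hρ]; exact le_max_left _ _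
  have hρ0 : (0:ℝ) ≤ ρ := le_trans zero_le_one hρ1
  have hρA : matOpNorm A ≤ ρ := by rw [hρ]; exact le_max_right _ _
  have hAw : ∀ w : EuclideanSpace ℝ (Fin d), ‖mulVecE A w‖ ≤ ρ * ‖w‖ := fun w =>
    (mulVecE_norm_le A w).trans (mul_le_mul_of_nonneg_right hρA (norm_nonneg w))
  have hAval : ∀ w : EuclideanSpace ℝ (Fin d), mulVecE A w = w - η • mulVecE H₀ w := by
    intro w
    rw [hAdef, mulVecE_subM, mulVecE_one, mulVecE_smulM]
  have hrbarA : ∀ i, rbar i = A i i := by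
    intro i
    rw [hrbar i, hAdef]
    simp [Matrix.sub_apply, Matrix.smul_apply, Matrix.one_apply_eq, smul_eq_mul]
  have hdiag_le : ∀ i, |A i i| ≤ matOpNorm A := by
    intro i
    have h1 : (fun j => (EuclideanSpace.single i (1:ℝ)) j) = Pi.single i 1 := by
      funext j; simp [EuclideanSpace.single_apply, Pi.single_apply]
    have h2 : mulVecE A (EuclideanSpace.single i 1) i = A i i := by
      rw [mulVecE_apply, h1, Matrix.mulVec_single]; simp
    calc |A i i| = |mulVecE A (EuclideanSpace.single i 1) i| := by rw [h2]
      _ ≤ ‖mulVecE A (EuclideanSpace.single i 1)‖ := coord_le_normE _ i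
      _ ≤ matOpNorm A * ‖EuclideanSpace.single i (1:ℝ)‖ := mulVecE_norm_le _ _
      _ = matOpNorm A := by simp
  have hrbarρ : ∀ i, |rbar i| ≤ ρ := fun i => by
    rw [hrbarA i]; exact (hdiag_le i).trans hρA
  have hBdiag : B = Matrix.diagonal rbar := by
    ext i j
    by_cases h : i = j
    · subst h
      simp [hBdef, Matrix.sub_apply, Matrix.smul_apply, Matrix.one_apply_eq,
        Matrix.diagonal_apply_eq, hrbar i, hDgdef, smul_eq_mul]
    · simp [hBdef, Matrix.sub_apply, Matrix.smul_apply, Matrix.one_apply_ne h,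
        Matrix.diagonal_apply_ne _ h, hDgdef, smul_eq_mul]
  have hBpow_apply : ∀ (n : ℕ) (v : EuclideanSpace ℝ (Fin d)) (i : Fin d),
      mulVecE (B ^ n) v i = rbar i ^ n * v i := by
    intro n v i
    rw [hBdiag, Matrix.diagonal_pow, mulVecE_apply, Matrix.mulVec_diagonal]
    simp
  have hBw : ∀ (n : ℕ) (v : EuclideanSpace ℝ (Fin d)), ‖mulVecE (B ^ n) v‖ ≤ ρ ^ n * ‖v‖ := by
    intro n v
    apply normE_le_of_coord_le (pow_nonneg hρ0 n)
    intro i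
    rw [hBpow_apply, abs_mul, abs_pow]
    exact mul_le_mul_of_nonneg_right (pow_le_pow_left₀ (abs_nonneg _) (hrbarρ i) n)
      (abs_nonneg _)
  -- quadratic-model identity
  have hqid : ∀ n : ℕ, g₀ + mulVecE H₀ (θquad n - θ₀) = mulVecE (A ^ n) g₀ := by
    intro n
    induction n with
    | zero => simp [hquad0, mulVecE_zero, mulVecE_one]
    | succ n ih =>
      have h1 : θquad (n + 1) - θ₀ = (θquad n - θ₀) - η • mulVecE (A ^ n) g₀ := by
        rw [hquad n]; abel
      calc g₀ + mulVecE H₀ (θquad (n + 1) - θ₀)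
          = (g₀ + mulVecE H₀ (θquad n - θ₀)) - η • mulVecE H₀ (mulVecE (A ^ n) g₀) := by
            rw [h1, mulVecE_subV, mulVecE_smulV]; abel
        _ = mulVecE (A ^ n) g₀ - η • mulVecE H₀ (mulVecE (A ^ n) g₀) := by rw [ih]
        _ = mulVecE (A ^ (n + 1)) g₀ := by rw [pow_succ', mulVecE_mul, hAval]
  -- distance bound on true trajectory
  have hdist : ∀ n, n ≤ K → ‖θtrue n - θ₀‖ ≤ n * η * G := by
    intro n
    induction n with
    | zero => intro _; simp [htrue0]
    | succ n ih =>
      intro h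
      have h1 : θtrue (n + 1) - θ₀ = (θtrue n - θ₀) - η • gradient L (θtrue n) := by
        rw [htrue n]; abel
      calc ‖θtrue (n + 1) - θ₀‖ ≤ ‖θtrue n - θ₀‖ + ‖η • gradient L (θtrue n)‖ := by
            rw [h1]; exact norm_sub_le _ _
        _ ≤ n * η * G + η * G := by
            refine add_le_add (ih (by omega)) ?_
            rw [norm_smul, Real.norm_eq_abs, abs_of_nonneg hη]
            exact mul_le_mul_of_nonneg_left (hGbd n (by omega)) hη
        _ = (n + 1 : ℕ) * η * G := by push_cast; ring
  -- Taylor bound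
  have hTay : ∀ n, n ≤ K → ‖gradient L (θtrue n) - g₀ - mulVecE H₀ (θtrue n - θ₀)‖ ≤
      M₃ / 2 * ‖θtrue n - θ₀‖ ^ 2 := by
    intro n hn
    have h := grad_taylor L U hU θ₀ hstar hL M₃ hbound (θtrue n) (hmemT n hn)
    rwa [← hg₀, ← hH₀ (θtrue n - θ₀)] at h
  -- error recursion between true and quad trajectories
  set c1 : ℝ := M₃ / 2 * (η * G) ^ 2 with hc1def
  have hc10 : 0 ≤ c1 := by positivity
  have herr : ∀ n, n ≤ K →
      ‖θtrue n - θquad n‖ ≤ (∑ m ∈ range n, (m : ℝ) ^ 2) * (η * c1) * ρ ^ (n - 1) := by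
    intro n
    induction n with
    | zero => intro _; simp [htrue0, hquad0]
    | succ n ih =>
      intro hn
      have hstepid : θtrue (n + 1) - θquad (n + 1) = mulVecE A (θtrue n - θquad n) -
          η • (gradient L (θtrue n) - g₀ - mulVecE H₀ (θtrue n - θ₀)) := by
        rw [htrue n, hquad n]
        have e1 : mulVecE (A ^ n) g₀ = g₀ + mulVecE H₀ (θquad n - θ₀) := (hqid n).symm
        rw [e1, hAval]
        simp only [mulVecE_subV]
        module
      have hT := hTay n (by omega)
      have hdn := hdist n (by omega)
      have hnorm2 : ‖θtrue n - θ₀‖ ^ 2 ≤ ((n : ℝ) * η * G) ^ 2 :=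
        pow_le_pow_left₀ (norm_nonneg _) hdn 2
      calc ‖θtrue (n + 1) - θquad (n + 1)‖
          ≤ ‖mulVecE A (θtrue n - θquad n)‖ +
            ‖η • (gradient L (θtrue n) - g₀ - mulVecE H₀ (θtrue n - θ₀))‖ := by
            rw [hstepid]; exact norm_sub_le _ _
        _ ≤ ρ * ‖θtrue n - θquad n‖ + η * (M₃ / 2 * ‖θtrue n - θ₀‖ ^ 2) := by
            refine add_le_add (hAw _) ?_
            rw [norm_smul, Real.norm_eq_abs, abs_of_nonneg hη]
            exact mul_le_mul_of_nonneg_left hT hη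
        _ ≤ ρ * ((∑ m ∈ range n, (m : ℝ) ^ 2) * (η * c1) * ρ ^ (n - 1)) +
            η * c1 * (n : ℝ) ^ 2 := by
            refine add_le_add (mul_le_mul_of_nonneg_left (ih (by omega)) hρ0) ?_
            have : M₃ / 2 * ‖θtrue n - θ₀‖ ^ 2 ≤ c1 * (n : ℝ) ^ 2 := by
              calc M₃ / 2 * ‖θtrue n - θ₀‖ ^ 2 ≤ M₃ / 2 * ((n : ℝ) * η * G) ^ 2 := by
                    exact mul_le_mul_of_nonneg_left hnorm2 (by positivity)
                _ = c1 * (n : ℝ) ^ 2 := by rw [hc1def]; ring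
            calc η * (M₃ / 2 * ‖θtrue n - θ₀‖ ^ 2) ≤ η * (c1 * (n : ℝ) ^ 2) :=
                  mul_le_mul_of_nonneg_left this hη
              _ = η * c1 * (n : ℝ) ^ 2 := by ring
        _ ≤ (∑ m ∈ range (n + 1), (m : ℝ) ^ 2) * (η * c1) * ρ ^ ((n + 1) - 1) := by
            rw [Finset.sum_range_succ]
            have hρn1 : ρ * ((∑ m ∈ range n, (m : ℝ) ^ 2) * (η * c1) * ρ ^ (n - 1)) ≤
                (∑ m ∈ range n, (m : ℝ) ^ 2) * (η * c1) * ρ ^ n := by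
              cases n with
              | zero => simp
              | succ m =>
                have : (m + 1 : ℕ) - 1 = m := by omega
                rw [this, pow_succ]
                have hsum0 : (0:ℝ) ≤ ∑ m ∈ range (m+1), (m : ℝ) ^ 2 :=
                  Finset.sum_nonneg fun _ _ => sq_nonneg _
                calc ρ * ((∑ x ∈ range (m+1), (x : ℝ) ^ 2) * (η * c1) * ρ ^ m)
                    = (∑ x ∈ range (m+1), (x : ℝ) ^ 2) * (η * c1) * (ρ ^ m * ρ) := by ring
                  _ ≤ (∑ x ∈ range (m+1), (x : ℝ) ^ 2) * (η * c1) * (ρ ^ m * ρ) := le_rfl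
            have hn2 : η * c1 * (n : ℝ) ^ 2 ≤ (n : ℝ) ^ 2 * (η * c1) * ρ ^ n := by
              have h1 : (1:ℝ) ≤ ρ ^ n := one_le_pow₀ hρ1
              calc η * c1 * (n : ℝ) ^ 2 = (n : ℝ) ^ 2 * (η * c1) * 1 := by ring
                _ ≤ (n : ℝ) ^ 2 * (η * c1) * ρ ^ n := by
                    refine mul_le_mul_of_nonneg_left h1 (by positivity)
            have hsimp : (n + 1) - 1 = n := by omega
            rw [hsimp, add_mul, add_mul]
            exact add_le_add hρn1 hn2
  -- final error bound for part A
  have heK : ‖θquad K - θtrue K‖ ≤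
      (K : ℝ) * ((K : ℝ) - 1) * (2 * (K : ℝ) - 1) / 12 * η ^ 3 * M₃ * G ^ 2 * ρ ^ (K - 1) := by
    have h := herr K le_rfl
    rw [norm_sub_rev]
    calc ‖θtrue K - θquad K‖ ≤ (∑ m ∈ range K, (m : ℝ) ^ 2) * (η * c1) * ρ ^ (K - 1) := h
      _ = (K : ℝ) * ((K : ℝ) - 1) * (2 * (K : ℝ) - 1) / 12 * η ^ 3 * M₃ * G ^ 2 * ρ ^ (K - 1) := by
          rw [sum_range_sq_cast, hc1def]; ring
  -- quad trajectory as a sum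
  have hquadsum : ∀ n : ℕ, θquad n = θ₀ - η • ∑ m ∈ range n, mulVecE (A ^ m) g₀ := by
    intro n
    induction n with
    | zero => simp [hquad0]
    | succ n ih =>
      rw [hquad n, ih, Finset.sum_range_succ, smul_add]
      abel
  -- difference between full-quad and diagonal-quad powers
  set cc : ℝ := η * matOpNorm Hoff * ‖g₀‖ with hccdef
  have hcc0 : 0 ≤ cc := by
    rw [hccdef]
    have : (0:ℝ) ≤ matOpNorm Hoff := norm_nonneg _
    positivity
  have hAmB : A - B = -(η • Hoff) := by
    rw [hAdef, hBdef, hHoffdef]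
    module
  have hu : ∀ n : ℕ, ‖mulVecE (A ^ n) g₀ - mulVecE (B ^ n) g₀‖ ≤
      (n : ℝ) * ρ ^ (n - 1) * cc := by
    intro n
    induction n with
    | zero => simp [mulVecE_one]
    | succ n ih =>
      have key : mulVecE (A ^ (n + 1)) g₀ - mulVecE (B ^ (n + 1)) g₀ =
          mulVecE A (mulVecE (A ^ n) g₀ - mulVecE (B ^ n) g₀) +
          mulVecE (A - B) (mulVecE (B ^ n) g₀) := by
        have e1 := mulVecE_subV A (mulVecE (A ^ n) g₀) (mulVecE (B ^ n) g₀)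
        have e2 := mulVecE_subM A B (mulVecE (B ^ n) g₀)
        rw [pow_succ', pow_succ', mulVecE_mul, mulVecE_mul, e1, e2]
        abel
      have h2 : ‖mulVecE (A - B) (mulVecE (B ^ n) g₀)‖ ≤ ρ ^ n * cc := by
        rw [hAmB]
        have e1 : mulVecE (-(η • Hoff)) (mulVecE (B ^ n) g₀) =
            -(η • mulVecE Hoff (mulVecE (B ^ n) g₀)) := by
          have h0 : -(η • Hoff) = (0 : Matrix (Fin d) (Fin d) ℝ) - η • Hoff := (zero_sub _).symm
          have e2 := mulVecE_subM (0 : Matrix (Fin d) (Fin d) ℝ) (η • Hoff) (mulVecE (B ^ n) g₀)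
          rw [h0, e2, mulVecE_smulM]
          simp [mulVecE]
        rw [e1, norm_neg, norm_smul, Real.norm_eq_abs, abs_of_nonneg hη]
        calc η * ‖mulVecE Hoff (mulVecE (B ^ n) g₀)‖
            ≤ η * (matOpNorm Hoff * ‖mulVecE (B ^ n) g₀‖) :=
              mul_le_mul_of_nonneg_left (mulVecE_norm_le _ _) hη
          _ ≤ η * (matOpNorm Hoff * (ρ ^ n * ‖g₀‖)) := by
              refine mul_le_mul_of_nonneg_left ?_ hη
              exact mul_le_mul_of_nonneg_left (hBw n g₀) (norm_nonneg _)
          _ = ρ ^ n * cc := by rw [hccdef]; ring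
      have h1 : ‖mulVecE A (mulVecE (A ^ n) g₀ - mulVecE (B ^ n) g₀)‖ ≤
          (n : ℝ) * ρ ^ n * cc := by
        calc ‖mulVecE A (mulVecE (A ^ n) g₀ - mulVecE (B ^ n) g₀)‖
            ≤ ρ * ‖mulVecE (A ^ n) g₀ - mulVecE (B ^ n) g₀‖ := hAw _
          _ ≤ ρ * ((n : ℝ) * ρ ^ (n - 1) * cc) := mul_le_mul_of_nonneg_left ih hρ0
          _ ≤ (n : ℝ) * ρ ^ n * cc := by
              cases n with
              | zero => simp
              | succ m =>
                have : (m + 1 : ℕ) - 1 = m := by omega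
                rw [this, pow_succ]
                calc ρ * ((m + 1 : ℕ) * ρ ^ m * cc) = ((m + 1 : ℕ) : ℝ) * (ρ ^ m * ρ) * cc := by
                      push_cast; ring
                  _ ≤ ((m + 1 : ℕ) : ℝ) * (ρ ^ m * ρ) * cc := le_rfl
      calc ‖mulVecE (A ^ (n + 1)) g₀ - mulVecE (B ^ (n + 1)) g₀‖
          ≤ ‖mulVecE A (mulVecE (A ^ n) g₀ - mulVecE (B ^ n) g₀)‖ +
            ‖mulVecE (A - B) (mulVecE (B ^ n) g₀)‖ := by rw [key]; exact norm_add_le _ _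
        _ ≤ (n : ℝ) * ρ ^ n * cc + ρ ^ n * cc := add_le_add h1 h2
        _ = ((n + 1 : ℕ) : ℝ) * ρ ^ ((n + 1) - 1) * cc := by
            have : (n + 1) - 1 = n := by omega
            rw [this]; push_cast; ring
  -- diagonal-quad point
  set θdq : EuclideanSpace ℝ (Fin d) := θ₀ - η • ∑ n ∈ range K, mulVecE (B ^ n) g₀ with hθdq
  have hq_dq : ‖θquad K - θdq‖ ≤
      (K : ℝ) * ((K : ℝ) - 1) / 2 * η ^ 2 * matOpNorm Hoff * ‖g₀‖ * ρ ^ (K - 2) := by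
    have hdiff : θquad K - θdq = η • ((∑ n ∈ range K, mulVecE (B ^ n) g₀) -
        (∑ n ∈ range K, mulVecE (A ^ n) g₀)) := by
      rw [hquadsum K, hθdq]
      module
    rw [hdiff, norm_smul, Real.norm_eq_abs, abs_of_nonneg hη]
    have hsub : (∑ n ∈ range K, mulVecE (B ^ n) g₀) - (∑ n ∈ range K, mulVecE (A ^ n) g₀) =
        ∑ n ∈ range K, (mulVecE (B ^ n) g₀ - mulVecE (A ^ n) g₀) := by
      rw [Finset.sum_sub_distrib]
    rw [hsub]
    calc η * ‖∑ n ∈ range K, (mulVecE (B ^ n) g₀ - mulVecE (A ^ n) g₀)‖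
        ≤ η * ∑ n ∈ range K, ‖mulVecE (B ^ n) g₀ - mulVecE (A ^ n) g₀‖ :=
          mul_le_mul_of_nonneg_left (norm_sum_le _ _) hη
      _ ≤ η * ∑ n ∈ range K, (n : ℝ) * ρ ^ (K - 2) * cc := by
          refine mul_le_mul_of_nonneg_left (Finset.sum_le_sum fun n hn => ?_) hη
          rw [norm_sub_rev]
          refine (hu n).trans ?_
          cases n with
          | zero => simp
          | succ m =>
            have hle : (m + 1) - 1 ≤ K - 2 := by
              have := Finset.mem_range.mp hn; omega
            refine mul_le_mul_of_nonneg_right ?_ hcc0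
            exact mul_le_mul_of_nonneg_left (pow_le_pow_right₀ hρ1 hle) (by positivity)
      _ = (K : ℝ) * ((K : ℝ) - 1) / 2 * η ^ 2 * matOpNorm Hoff * ‖g₀‖ * ρ ^ (K - 2) := by
          rw [← Finset.sum_mul, ← Finset.sum_mul, sum_range_cast, hccdef]
          ring
  -- empirical part
  have hCrange : CKR = ∑ n ∈ range K, (n : ℝ) * R ^ (n - 1) := by
    rw [hC]
    refine Finset.sum_subset ?_ ?_
    · intro n hn
      rw [Finset.mem_Icc] at hn
      exact Finset.mem_range.mpr (by omega)
    · intro n hn hn2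
      rw [Finset.mem_range] at hn
      rw [Finset.mem_Icc] at hn2
      have : n = 0 := by omega
      simp [this]
  have hCKR0 : 0 ≤ CKR := by
    rw [hC]
    exact Finset.sum_nonneg fun n _ => mul_nonneg (Nat.cast_nonneg n) (pow_nonneg hR _)
  have hsup_ge : ∀ j, |g₀ j| ≤ vecSupNorm hd (fun j => g₀ j) := fun j =>
    Finset.le_sup' (fun j => |g₀ j|) (Finset.mem_univ j)
  have hsup0 : 0 ≤ vecSupNorm hd (fun j => g₀ j) := (abs_nonneg _).trans (hsup_ge ⟨0, hd⟩)
  have hoff0 : 0 ≤ offRowSum hd H₀ :=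
    le_trans (Finset.sum_nonneg fun j _ => abs_nonneg _)
      (Finset.le_sup' (fun i => ∑ j ∈ Finset.univ.erase i, |H₀ i j|) (Finset.mem_univ ⟨0, hd⟩))
  have hmv_split : ∀ i, H₀.mulVec (fun j => g₀ j) i =
      H₀ i i * g₀ i + ∑ j ∈ Finset.univ.erase i, H₀ i j * g₀ j := by
    intro i
    have h1 : H₀.mulVec (fun j => g₀ j) i = ∑ j, H₀ i j * g₀ j := by
      simp [Matrix.mulVec, dotProduct]
    rw [h1, ← Finset.add_sum_erase _ _ (Finset.mem_univ i)]
  have hrdiff : ∀ i, δ < |g₀ i| → |r i - rbar i| ≤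
      η * (offRowSum hd H₀ * vecSupNorm hd (fun j => g₀ j)) / δ := by
    intro i hi
    have hne : g₀ i ≠ 0 := by
      intro h
      rw [h] at hi
      simp at hi
      linarith
    have hreq : r i - rbar i = -(η * (∑ j ∈ Finset.univ.erase i, H₀ i j * g₀ j) / g₀ i) := by
      rw [hr i hi, hrbar i, hg₁ i, hmv_split i]
      field_simp
      ring
    rw [hreq, abs_neg, abs_div, abs_mul, abs_of_nonneg hη]
    have hnum : |∑ j ∈ Finset.univ.erase i, H₀ i j * g₀ j| ≤
        offRowSum hd H₀ * vecSupNorm hd (fun j => g₀ j) := by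
      calc |∑ j ∈ Finset.univ.erase i, H₀ i j * g₀ j|
          ≤ ∑ j ∈ Finset.univ.erase i, |H₀ i j * g₀ j| := Finset.abs_sum_le_sum_abs _ _
        _ ≤ ∑ j ∈ Finset.univ.erase i, |H₀ i j| * vecSupNorm hd (fun j => g₀ j) := by
            refine Finset.sum_le_sum fun j _ => ?_
            rw [abs_mul]
            exact mul_le_mul_of_nonneg_left (hsup_ge j) (abs_nonneg _)
        _ = (∑ j ∈ Finset.univ.erase i, |H₀ i j|) * vecSupNorm hd (fun j => g₀ j) :=
            (Finset.sum_mul _ _ _).symm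
        _ ≤ offRowSum hd H₀ * vecSupNorm hd (fun j => g₀ j) :=
            mul_le_mul_of_nonneg_right
              (Finset.le_sup' (fun i => ∑ j ∈ Finset.univ.erase i, |H₀ i j|)
                (Finset.mem_univ i)) hsup0
    have hden : δ ≤ |g₀ i| := le_of_lt hi
    exact div_le_div₀ (mul_nonneg hη (mul_nonneg hoff0 hsup0))
      (mul_le_mul_of_nonneg_left hnum hη) hδ hden
  -- coordinates of the diagonal-quad point
  have hdq_coord : ∀ i, θdq i = θ₀ i - η * (SK K (rbar i) * g₀ i) := by
    intro i
    have h1 : θdq i = θ₀ i - η * ((∑ n ∈ range K, mulVecE (B ^ n) g₀) i) := by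
      rw [hθdq]
      simp
    rw [h1, sumE_apply]
    have h2 : ∑ n ∈ range K, mulVecE (B ^ n) g₀ i = ∑ n ∈ range K, rbar i ^ n * g₀ i :=
      Finset.sum_congr rfl fun n _ => hBpow_apply n g₀ i
    rw [h2, ← Finset.sum_mul]
    simp only [SK]
  -- coordinatewise bounds on θemp - θdq
  have hempA : ∀ i, δ < |g₀ i| → |θemp i - θdq i| ≤
      (η ^ 2 * CKR * (offRowSum hd H₀ / δ) * vecSupNorm hd (fun j => g₀ j)) * |g₀ i| := by
    intro i hi
    have h1 : θemp i - θdq i = η * g₀ i * (SK K (rbar i) - SK K (r i)) := by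
      rw [hemp i, if_pos hi, hdq_coord i]
      ring
    rw [h1, abs_mul, abs_mul, abs_of_nonneg hη]
    have h2 : |SK K (rbar i) - SK K (r i)| ≤ CKR * |rbar i - r i| := by
      rw [hCrange]
      exact SK_lip (hrbarR i) (hrR i hi)
    have h3 : |rbar i - r i| ≤ η * (offRowSum hd H₀ * vecSupNorm hd (fun j => g₀ j)) / δ := by
      rw [abs_sub_comm]
      exact hrdiff i hi
    calc η * |g₀ i| * |SK K (rbar i) - SK K (r i)|
        ≤ η * |g₀ i| * (CKR * (η * (offRowSum hd H₀ * vecSupNorm hd (fun j => g₀ j)) / δ)) := by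
          refine mul_le_mul_of_nonneg_left
            (h2.trans (mul_le_mul_of_nonneg_left h3 hCKR0))
            (mul_nonneg hη (abs_nonneg _))
      _ = (η ^ 2 * CKR * (offRowSum hd H₀ / δ) * vecSupNorm hd (fun j => g₀ j)) * |g₀ i| := by
          ring
  have tri : ∀ a b : ℝ, |a - b| ≤ |a| + |b| := fun a b => by
    rw [sub_eq_add_neg]
    exact (abs_add_le _ _).trans (by rw [abs_neg])
  have hempS : ∀ i, ¬ δ < |g₀ i| → |θemp i - θdq i| ≤
      η * DKR * |g₀ i| + η ^ 2 * |H₀.mulVec (fun j => g₀ j) i| := by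
    intro i hi
    have h1 : θemp i - θdq i = η * (SK K (rbar i) * g₀ i - g₀ i - g₁ i) := by
      rw [hemp i, if_neg hi, hdq_coord i]
      ring
    rw [h1, abs_mul, abs_of_nonneg hη]
    have hSK : |SK K (rbar i)| ≤ ∑ n ∈ range K, R ^ n := SK_abs_le (hrbarR i)
    have hg1 : |g₁ i| ≤ |g₀ i| + η * |H₀.mulVec (fun j => g₀ j) i| := by
      rw [hg₁ i]
      refine (tri _ _).trans ?_
      rw [abs_mul, abs_of_nonneg hη]
    have hchain : |SK K (rbar i) * g₀ i - g₀ i - g₁ i| ≤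
        (∑ n ∈ range K, R ^ n) * |g₀ i| + |g₀ i| +
          (|g₀ i| + η * |H₀.mulVec (fun j => g₀ j) i|) := by
      calc |SK K (rbar i) * g₀ i - g₀ i - g₁ i|
          ≤ |SK K (rbar i) * g₀ i - g₀ i| + |g₁ i| := tri _ _
        _ ≤ (|SK K (rbar i) * g₀ i| + |g₀ i|) + |g₁ i| := by
            exact add_le_add_left (tri _ _) _
        _ ≤ ((∑ n ∈ range K, R ^ n) * |g₀ i| + |g₀ i|) +
            (|g₀ i| + η * |H₀.mulVec (fun j => g₀ j) i|) := by
            refine add_le_add (add_le_add_left ?_ _) hg1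
            rw [abs_mul]
            exact mul_le_mul_of_nonneg_right hSK (abs_nonneg _)
    calc η * |SK K (rbar i) * g₀ i - g₀ i - g₁ i|
        ≤ η * ((∑ n ∈ range K, R ^ n) * |g₀ i| + |g₀ i| +
            (|g₀ i| + η * |H₀.mulVec (fun j => g₀ j) i|)) :=
          mul_le_mul_of_nonneg_left hchain hη
      _ = η * DKR * |g₀ i| + η ^ 2 * |H₀.mulVec (fun j => g₀ j) i| := by
          rw [hDk]
          ring
  -- split θemp - θdq into the 𝒜 and 𝒮 parts
  set gA := toE (fun i => if δ < |g₀ i| then g₀ i else 0) with hgA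
  set wA := toE (fun i => if δ < |g₀ i| then θemp i - θdq i else 0) with hwA
  set wS := toE (fun i => if δ < |g₀ i| then 0 else θemp i - θdq i) with hwS
  have hsplit : θemp - θdq = wA + wS := by
    ext i
    have h1 : (wA + wS) i = wA i + wS i := rfl
    have h2 : (θemp - θdq) i = θemp i - θdq i := rfl
    rw [h2]
    show θemp i - θdq i = wA i + wS i
    rw [hwA, hwS, toE_apply, toE_apply]
    by_cases hi : δ < |g₀ i|
    · rw [if_pos hi, if_pos hi, add_zero]
    · rw [if_neg hi, if_neg hi, zero_add]
  have hnA : ‖wA‖ ≤ η ^ 2 * CKR * (offRowSum hd H₀ / δ) * vecSupNorm hd (fun j => g₀ j) *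
      ‖gA‖ := by
    have hc0 : 0 ≤ η ^ 2 * CKR * (offRowSum hd H₀ / δ) * vecSupNorm hd (fun j => g₀ j) := by
      positivity
    apply normE_le_of_coord_le hc0
    intro i
    rw [hwA, hgA, toE_apply, toE_apply]
    by_cases hi : δ < |g₀ i|
    · rw [if_pos hi, if_pos hi]
      exact hempA i hi
    · rw [if_neg hi, if_neg hi]
      simp
  have hnS : ‖wS‖ ≤
      η * DKR * (∑ i ∈ Finset.univ.filter (fun i => ¬ δ < |g₀ i|), |g₀ i|) +
      η ^ 2 * ∑ i ∈ Finset.univ.filter (fun i => ¬ δ < |g₀ i|),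
        |H₀.mulVec (fun j => g₀ j) i| := by
    calc ‖wS‖ ≤ ∑ i ∈ Finset.univ.filter (fun i => ¬ δ < |g₀ i|), |wS i| := by
          refine normE_le_sum_abs _ _ ?_
          intro i hi
          have h1 : δ < |g₀ i| := by simpa using hi
          rw [hwS, toE_apply, if_pos h1]
      _ ≤ ∑ i ∈ Finset.univ.filter (fun i => ¬ δ < |g₀ i|),
            (η * DKR * |g₀ i| + η ^ 2 * |H₀.mulVec (fun j => g₀ j) i|) := by
          refine Finset.sum_le_sum fun i hi => ?_
          have hi' := (Finset.mem_filter.mp hi).2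
          rw [hwS, toE_apply, if_neg hi']
          exact hempS i hi'
      _ = _ := by
          rw [Finset.sum_add_distrib, ← Finset.mul_sum, ← Finset.mul_sum]
  -- final assembly
  have htri : ‖θemp - θtrue K‖ ≤ ‖θemp - θdq‖ + ‖θquad K - θdq‖ + ‖θquad K - θtrue K‖ := by
    have t1 : θemp - θtrue K = (θemp - θdq) + (θdq - θquad K) + (θquad K - θtrue K) := by
      abel
    rw [t1]
    refine (norm_add_le _ _).trans ?_
    refine add_le_add_left ((norm_add_le _ _).trans ?_) _
    rw [norm_sub_rev θdq]
  have hed : ‖θemp - θdq‖ ≤ ‖wA‖ + ‖wS‖ := by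
    rw [hsplit]
    exact norm_add_le _ _
  linarith [htri, hed, hnA, hnS, hq_dq, heK]
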